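/- Under the hypotheses of monotone velocity, the composed supply function w ↦ s(ρ†(v⁺,w), w) is non-decreasing in w, where ρ†(v⁺,w) is the density with V(ρ†,w) = v⁺ and s is the supply function. -/
import Mathlib


/-- The composed supply function w ↦ s(ρ†(v⁺,w), w) is
non-decreasing in w, where ρ†(v⁺,w) is the density with V(ρ†,w) = v⁺,
s(ρ,w) = Qmax(w) for ρ ≤ σ(w) and s(ρ,w) = Q(ρ,w) for ρ > σ(w). -/
theorem gsom_supply_of_rho_dagger_monotone
    (ρmax wL wR vplus : ℝ) (hρmax : 0 < ρmax) (hw : wL ≤ wR) (hv : 0 < vplus)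
    (V Q : ℝ → ℝ → ℝ) (σ Qmax : ℝ → ℝ) (s : ℝ → ℝ → ℝ) (ρd : ℝ → ℝ)
    (hQ : ∀ ρ w, Q ρ w = ρ * V ρ w)
    (hcont : ∀ w ∈ Set.Icc wL wR, ContinuousOn (fun ρ => V ρ w) (Set.Icc 0 ρmax))
    (hanti : ∀ w ∈ Set.Icc wL wR, StrictAntiOn (fun ρ => V ρ w) (Set.Icc 0 ρmax))
    (hzero : ∀ w ∈ Set.Icc wL wR, V ρmax w = 0)
    (hVmono : ∀ ρ ∈ Set.Icc (0:ℝ) ρmax, ∀ w ∈ Set.Icc wL wR, ∀ w' ∈ Set.Icc wL wR,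
      w ≤ w' → V ρ w ≤ V ρ w')
    (hconc : ∀ w ∈ Set.Icc wL wR, StrictConcaveOn ℝ (Set.Icc 0 ρmax) (fun ρ => Q ρ w))
    (hσmem : ∀ w ∈ Set.Icc wL wR, σ w ∈ Set.Ioo 0 ρmax)
    (hσmax : ∀ w ∈ Set.Icc wL wR, ∀ ρ ∈ Set.Icc (0:ℝ) ρmax, Q ρ w ≤ Q (σ w) w)
    (hQmax : ∀ w ∈ Set.Icc wL wR, Qmax w = Q (σ w) w)
    (hs : ∀ w ∈ Set.Icc wL wR, ∀ ρ,
      (ρ ≤ σ w → s ρ w = Qmax w) ∧ (σ w < ρ → s ρ w = Q ρ w))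
    (hρd : ∀ w ∈ Set.Icc wL wR,
      ρd w ∈ Set.Icc (0:ℝ) ρmax ∧ V (ρd w) w = vplus)
    (hQmaxmono : ∀ w ∈ Set.Icc wL wR, ∀ w' ∈ Set.Icc wL wR, w ≤ w' → Qmax w ≤ Qmax w')
    (hρdmono : MonotoneOn ρd (Set.Icc wL wR)) :
    MonotoneOn (fun w => s (ρd w) w) (Set.Icc wL wR) := by
  intro w hwm w' hw'm hle
  obtain ⟨hρdw, hVw⟩ := hρd w hwm
  obtain ⟨hρdw', hVw'⟩ := hρd w' hw'm
  have hσw := hσmem w hwm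
  have hσw' := hσmem w' hw'm
  have hσwI : σ w ∈ Set.Icc (0:ℝ) ρmax := ⟨hσw.1.le, hσw.2.le⟩
  have hσw'I : σ w' ∈ Set.Icc (0:ℝ) ρmax := ⟨hσw'.1.le, hσw'.2.le⟩
  have hρdle : ρd w ≤ ρd w' := hρdmono hwm hw'm hle
  -- value of Q at ρd : Q (ρd u) u = ρd u * vplus
  have hQρdw : Q (ρd w) w = ρd w * vplus := by rw [hQ, hVw]
  have hQρdw' : Q (ρd w') w' = ρd w' * vplus := by rw [hQ, hVw']
  -- s (ρd w) w ≤ Qmax w always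
  have hsle : s (ρd w) w ≤ Qmax w := by
    rcases le_or_gt (ρd w) (σ w) with h | h
    · rw [(hs w hwm (ρd w)).1 h]
    · rw [(hs w hwm (ρd w)).2 h, hQmax w hwm]
      exact hσmax w hwm _ hρdw
  simp only
  rcases le_or_gt (ρd w') (σ w') with h' | h'
  · -- s (ρd w') w' = Qmax w'
    rw [(hs w' hw'm (ρd w')).1 h']
    exact hsle.trans (hQmaxmono w hwm w' hw'm hle)
  · -- s (ρd w') w' = Q (ρd w') w' = ρd w' * vplus
    rw [(hs w' hw'm (ρd w')).2 h']
    rcases le_or_gt (ρd w) (σ w) with h | h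
    · -- s (ρd w) w = Qmax w; need Qmax w ≤ Q (ρd w') w'
      rw [(hs w hwm (ρd w)).1 h]
      -- V (σ w) w ≤ vplus since ρd w ≤ σ w
      have hVσ : V (σ w) w ≤ vplus := by
        rcases eq_or_lt_of_le h with heq | hlt
        · rw [← heq, hVw]
        · rw [← hVw]; exact ((hanti w hwm) hρdw hσwI hlt).le
      rcases le_or_gt (σ w) (ρd w') with hcase | hcase
      · -- Qmax w = σ w * V(σ w, w) ≤ σ w * vplus ≤ ρd w' * vplus
        rw [hQmax w hwm, hQ, hQρdw']
        calc σ w * V (σ w) w ≤ σ w * vplus := by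
              exact mul_le_mul_of_nonneg_left hVσ hσw.1.le
          _ ≤ ρd w' * vplus := by
              exact mul_le_mul_of_nonneg_right hcase hv.le
      · -- σ w' < ρd w' < σ w : use concavity of Q(·,w') on [σ w', σ w]
        have h1 : Q (σ w) w ≤ Q (σ w) w' := by
          rw [hQ, hQ]
          exact mul_le_mul_of_nonneg_left
            (hVmono _ hσwI w hwm w' hw'm hle) hσw.1.le
        have h2 : Q (σ w) w' ≤ Q (ρd w') w' := by
          have hmin := (hconc w' hw'm).concaveOn.min_le_of_mem_Icc
            (x := σ w') (y := σ w) (z := ρd w') hσw'I hσwI ⟨h'.le, hcase.le⟩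
          have hmaxle : Q (σ w) w' ≤ Q (σ w') w' := hσmax w' hw'm _ hσwI
          calc Q (σ w) w' = min (Q (σ w') w') (Q (σ w) w') := by
                rw [min_eq_right hmaxle]
            _ ≤ Q (ρd w') w' := hmin
        rw [hQmax w hwm]
        exact h1.trans h2
    · -- both supercritical: ρd w * vplus ≤ ρd w' * vplus
      rw [(hs w hwm (ρd w)).2 h, hQρdw, hQρdw']
      exact mul_le_mul_of_nonneg_right hρdle hv.le
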